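/- If all five partial derivatives of f vanish both at (0,0,0,1,0) and at (0,0,0,0,1) (i.e. the cubic X is singular at the two points [0:0:0:1:0] and [0:0:0:0:1] of the line l), then L₁₁ = 0 and L₂₂ = 0, and det A = L₁₂·(2Q₁Q₂ − L₁₂C). In particular the degree-5 polynomial det A factors as the product of the linear form L₁₂ and the quartic 2Q₁Q₂ − L₁₂C, and Q_Θ = −L₁₂² is the square of a linear form (the theta-conic is the double line {L₁₂ = 0}). -/

import Mathlib

open MvPolynomial

lemma aux_pderiv_supported {s : Set (Fin 5)} (i : Fin 5) {p : MvPolynomial (Fin 5) ℂ}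
    (hp : p ∈ supported ℂ s) : pderiv i p ∈ supported ℂ s := by
  rw [supported] at hp ⊢
  induction hp using Algebra.adjoin_induction with
  | mem x hx =>
      obtain ⟨j, hj, rfl⟩ := hx
      by_cases h : j = i
      · subst h; simp [pderiv_X_self, Subalgebra.one_mem]
      · simp [pderiv_X_of_ne h, Subalgebra.zero_mem]
  | algebraMap r => simp [Subalgebra.zero_mem]
  | add x y hx hy ihx ihy => simpa using Subalgebra.add_mem _ ihx ihy
  | mul x y hx hy ihx ihy =>
      rw [pderiv_mul]
      exact Subalgebra.add_mem _ (Subalgebra.mul_mem _ ihx hy) (Subalgebra.mul_mem _ hx ihy)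

lemma aux_constantCoeff_pderiv (i : Fin 5) (p : MvPolynomial (Fin 5) ℂ) :
    constantCoeff (pderiv i p) = coeff (Finsupp.single i 1) p := by
  classical
  induction p using MvPolynomial.induction_on with
  | C a =>
      rw [pderiv_C, coeff_C, if_neg (by simp [eq_comm, Finsupp.single_eq_zero])]
      simp
  | add p q hp hq => simp [hp, hq, coeff_add]
  | mul_X p j hp =>
      rw [pderiv_mul, map_add, map_mul, map_mul, coeff_mul_X']
      by_cases h : j = i
      · subst h
        simp [hp, Finsupp.single_eq_same, constantCoeff_eq]
      · simp [pderiv_X_of_ne h, Finsupp.single_apply, Ne.symm h, h, constantCoeff_X]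

lemma aux_degree_single (i : Fin 5) : (Finsupp.single i 1).degree = 1 := by
  exact Finsupp.degree_single i 1

lemma aux_eval_supported (g : Fin 5 → ℂ) {p : MvPolynomial (Fin 5) ℂ}
    (hp : p ∈ supported ℂ ({0, 1, 2} : Set (Fin 5)))
    (h0 : g 0 = 0) (h1 : g 1 = 0) (h2 : g 2 = 0) :
    eval g p = constantCoeff p := by
  have hv := mem_supported.mp hp
  have hz : ∀ i ∈ p.vars, g i = 0 := by
    intro i hi
    rcases hv (Finset.mem_coe.mpr hi) with rfl | rfl | rfl <;> assumption
  simpa using eval₂Hom_eq_constantCoeff_of_vars (RingHom.id ℂ) hz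

lemma aux_coeff_supported {p : MvPolynomial (Fin 5) ℂ}
    (hp : p ∈ supported ℂ ({0, 1, 2} : Set (Fin 5))) {i : Fin 5}
    (hi : i ∉ ({0, 1, 2} : Set (Fin 5))) : coeff (Finsupp.single i 1) p = 0 := by
  by_contra h
  exact hi (mem_supported.mp hp ((mem_vars i).mpr ⟨_, mem_support_iff.mpr h, by simp⟩))

lemma aux_degree_one_exists (m : Fin 5 →₀ ℕ) (h : m.degree = 1) :
    ∃ i : Fin 5, m = Finsupp.single i 1 := by
  have h2 : ∑ j : Fin 5, m j = 1 := by
    rw [← h, Finsupp.degree]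
    exact (Finset.sum_subset (Finset.subset_univ _)
      (fun x _ hx => Finsupp.notMem_support_iff.mp hx)).symm
  rw [Fin.sum_univ_five] at h2
  have h5 : m 0 = 1 ∨ m 1 = 1 ∨ m 2 = 1 ∨ m 3 = 1 ∨ m 4 = 1 := by omega
  rcases h5 with h'|h'|h'|h'|h'
  · exact ⟨0, Finsupp.ext fun j => by fin_cases j <;> simp [Finsupp.single_apply] <;> omega⟩
  · exact ⟨1, Finsupp.ext fun j => by fin_cases j <;> simp [Finsupp.single_apply] <;> omega⟩
  · exact ⟨2, Finsupp.ext fun j => by fin_cases j <;> simp [Finsupp.single_apply] <;> omega⟩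
  · exact ⟨3, Finsupp.ext fun j => by fin_cases j <;> simp [Finsupp.single_apply] <;> omega⟩
  · exact ⟨4, Finsupp.ext fun j => by fin_cases j <;> simp [Finsupp.single_apply] <;> omega⟩

lemma aux_key (a b : Fin 5) (hab : a ≠ b)
    (ha0 : a ≠ 0) (ha1 : a ≠ 1) (ha2 : a ≠ 2)
    (hb0 : b ≠ 0) (hb1 : b ≠ 1) (hb2 : b ≠ 2)
    (L11 L12 L22 Q1 Q2 C : MvPolynomial (Fin 5) ℂ)
    (hL11 : L11.IsHomogeneous 1)
    (hQ1 : Q1.IsHomogeneous 2) (hC : C.IsHomogeneous 3)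
    (hL11s : L11 ∈ MvPolynomial.supported ℂ ({0, 1, 2} : Set (Fin 5)))
    (hQ1s : Q1 ∈ MvPolynomial.supported ℂ ({0, 1, 2} : Set (Fin 5)))
    (hCs : C ∈ MvPolynomial.supported ℂ ({0, 1, 2} : Set (Fin 5)))
    (hsing : ∀ i : Fin 5, eval (fun j => if j = a then (1 : ℂ) else 0)
      (pderiv i (X a ^ 2 * L11 + 2 * X a * X b * L12 + X b ^ 2 * L22
        + 2 * X a * Q1 + 2 * X b * Q2 + C)) = 0) :
    L11 = 0 := by
  ext m
  rw [coeff_zero]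
  by_cases hm : m.degree = 1
  · obtain ⟨i, rfl⟩ := aux_degree_one_exists m hm
    by_cases hi : i ∈ ({0, 1, 2} : Set (Fin 5))
    · have hai : a ≠ i := by rintro rfl; simp [Set.mem_insert_iff] at hi; tauto
      have hbi : b ≠ i := by rintro rfl; simp [Set.mem_insert_iff] at hi; tauto
      have h2 : (pderiv i) (2 : MvPolynomial (Fin 5) ℂ) = 0 := by
        rw [show (2 : MvPolynomial (Fin 5) ℂ) = MvPolynomial.C 2 from (map_ofNat _ 2).symm,
          pderiv_C]
      have H := hsing i
      simp only [map_add, pderiv_mul, pderiv_pow, pderiv_X_of_ne hai, pderiv_X_of_ne hbi, h2,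
        mul_zero, zero_mul, add_zero, zero_add, map_mul, map_pow, eval_X, if_pos rfl,
        if_neg hab.symm, one_pow, mul_one, one_mul] at H
      have e1 : (eval fun j => if j = a then (1:ℂ) else 0) ((pderiv i) L11)
          = coeff (Finsupp.single i 1) L11 := by
        rw [aux_eval_supported _ (aux_pderiv_supported i hL11s) (if_neg (Ne.symm ha0))
          (if_neg (Ne.symm ha1)) (if_neg (Ne.symm ha2)), aux_constantCoeff_pderiv]
      have e2 : (eval fun j => if j = a then (1:ℂ) else 0) ((pderiv i) Q1) = 0 := by
        rw [aux_eval_supported _ (aux_pderiv_supported i hQ1s) (if_neg (Ne.symm ha0))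
          (if_neg (Ne.symm ha1)) (if_neg (Ne.symm ha2)), aux_constantCoeff_pderiv]
        exact hQ1.coeff_eq_zero (by rw [aux_degree_single]; norm_num)
      have e3 : (eval fun j => if j = a then (1:ℂ) else 0) ((pderiv i) C) = 0 := by
        rw [aux_eval_supported _ (aux_pderiv_supported i hCs) (if_neg (Ne.symm ha0))
          (if_neg (Ne.symm ha1)) (if_neg (Ne.symm ha2)), aux_constantCoeff_pderiv]
        exact hC.coeff_eq_zero (by rw [aux_degree_single]; norm_num)
      rw [e1, e2, e3] at H
      simpa using H
    · exact aux_coeff_supported hL11s hi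
  · exact hL11.coeff_eq_zero hm

/-- If the cubic f = u²L₁₁ + 2uvL₁₂ + v²L₂₂ + 2uQ₁ + 2vQ₂ + C is
singular at both [0:0:0:1:0] and [0:0:0:0:1], then L₁₁ = 0, L₂₂ = 0, and
det A = L₁₂·(2Q₁Q₂ − L₁₂C); in particular the quintic det A factors as the product of
the linear form L₁₂ and the quartic 2Q₁Q₂ − L₁₂C, and Q_Θ = L₁₁L₂₂ − L₁₂² = −L₁₂² is
the square of a homogeneous linear form. -/
theorem stmt_18
    (L11 L12 L22 Q1 Q2 C : MvPolynomial (Fin 5) ℂ)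
    (hL11 : L11.IsHomogeneous 1) (hL12 : L12.IsHomogeneous 1) (hL22 : L22.IsHomogeneous 1)
    (hQ1 : Q1.IsHomogeneous 2) (hQ2 : Q2.IsHomogeneous 2) (hC : C.IsHomogeneous 3)
    (hL11s : L11 ∈ MvPolynomial.supported ℂ ({0, 1, 2} : Set (Fin 5)))
    (hL12s : L12 ∈ MvPolynomial.supported ℂ ({0, 1, 2} : Set (Fin 5)))
    (hL22s : L22 ∈ MvPolynomial.supported ℂ ({0, 1, 2} : Set (Fin 5)))
    (hQ1s : Q1 ∈ MvPolynomial.supported ℂ ({0, 1, 2} : Set (Fin 5)))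
    (hQ2s : Q2 ∈ MvPolynomial.supported ℂ ({0, 1, 2} : Set (Fin 5)))
    (hCs : C ∈ MvPolynomial.supported ℂ ({0, 1, 2} : Set (Fin 5)))
    (f : MvPolynomial (Fin 5) ℂ)
    (hf : f = X 3 ^ 2 * L11 + 2 * X 3 * X 4 * L12 + X 4 ^ 2 * L22
      + 2 * X 3 * Q1 + 2 * X 4 * Q2 + C)
    (A : Matrix (Fin 3) (Fin 3) (MvPolynomial (Fin 5) ℂ))
    (hA : A = !![L11, L12, Q1; L12, L22, Q2; Q1, Q2, C])
    (hsing1 : ∀ i : Fin 5,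
      eval (fun j => if j = 3 then (1 : ℂ) else 0) (pderiv i f) = 0)
    (hsing2 : ∀ i : Fin 5,
      eval (fun j => if j = 4 then (1 : ℂ) else 0) (pderiv i f) = 0) :
    L11 = 0 ∧ L22 = 0 ∧
    A.det = L12 * (2 * Q1 * Q2 - L12 * C) ∧
    L11 * L22 - L12 ^ 2 = -(L12 ^ 2) ∧
    ∃ M : MvPolynomial (Fin 5) ℂ, M.IsHomogeneous 1 ∧ L11 * L22 - L12 ^ 2 = M ^ 2 := by
  have hs1 : ∀ i : Fin 5, eval (fun j => if j = 3 then (1 : ℂ) else 0)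
      (pderiv i (X 3 ^ 2 * L11 + 2 * X 3 * X 4 * L12 + X 4 ^ 2 * L22
        + 2 * X 3 * Q1 + 2 * X 4 * Q2 + C)) = 0 := by
    intro i; rw [← hf]; exact hsing1 i
  have hL11z : L11 = 0 := aux_key 3 4 (by decide) (by decide) (by decide) (by decide)
    (by decide) (by decide) (by decide) L11 L12 L22 Q1 Q2 C hL11 hQ1 hC hL11s hQ1s hCs hs1
  have hs2 : ∀ i : Fin 5, eval (fun j => if j = 4 then (1 : ℂ) else 0)
      (pderiv i (X 4 ^ 2 * L22 + 2 * X 4 * X 3 * L12 + X 3 ^ 2 * L11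
        + 2 * X 4 * Q2 + 2 * X 3 * Q1 + C)) = 0 := by
    intro i
    have hf' : X 4 ^ 2 * L22 + 2 * X 4 * X 3 * L12 + X 3 ^ 2 * L11
        + 2 * X 4 * Q2 + 2 * X 3 * Q1 + C = f := by rw [hf]; ring
    rw [hf']; exact hsing2 i
  have hL22z : L22 = 0 := aux_key 4 3 (by decide) (by decide) (by decide) (by decide)
    (by decide) (by decide) (by decide) L22 L12 L11 Q2 Q1 C hL22 hQ2 hC hL22s hQ2s hCs hs2
  refine ⟨hL11z, hL22z, ?_, ?_, MvPolynomial.C Complex.I * L12, ?_, ?_⟩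
  · rw [hA, Matrix.det_fin_three, hL11z, hL22z]
    simp
    ring
  · rw [hL11z, hL22z]; ring
  · simpa using (isHomogeneous_C (Fin 5) Complex.I).mul hL12
  · rw [hL11z, hL22z, mul_pow, ← map_pow, Complex.I_sq, map_neg, map_one]; ring
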